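/- For every n ≥ 0 and fixed x_0 ∈ R, D^r(n){ r/(x_0² + r²) } = (-1)^n 2^n n! r / (x_0² + r²)^{n+1} as functions of r ∈ (0,∞). -/

import Mathlib

/-- `Dr n f = ((1/r) d/dr)^n f`, the `n`-fold composition of `f ↦ (1/r) f'`. -/
noncomputable def Dr : ℕ → (ℝ → ℝ) → (ℝ → ℝ)
  | 0, f => f
  | n + 1, f => fun r => (1 / r) * deriv (Dr n f) r

/-- `Dsup n`, i.e. `D^r(n)`: `D^r(0){f} = f`, `D^r(n){f} = d/dr (D^r(n-1){f} / r)`. -/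
noncomputable def Dsup : ℕ → (ℝ → ℝ) → (ℝ → ℝ)
  | 0, f => f
  | n + 1, f => fun r => deriv (fun s => Dsup n f s / s) r

/-- for every `n ≥ 0` and fixed `x₀ ∈ ℝ`,
`D^r(n){r/(x₀²+r²)} = (-1)^n 2^n n! r / (x₀²+r²)^{n+1}` on `(0,∞)`. -/
theorem Dsup_cauchy_kernel_real (n : ℕ) (x₀ : ℝ) :
    ∀ r ∈ Set.Ioi (0 : ℝ),
      Dsup n (fun s => s / (x₀ ^ 2 + s ^ 2)) r =
        (-1 : ℝ) ^ n * 2 ^ n * n.factorial * r / (x₀ ^ 2 + r ^ 2) ^ (n + 1) := by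
  induction n with
  | zero =>
    intro r _
    simp [Dsup]
  | succ n ih =>
    intro r hr
    have hr0 : (0:ℝ) < r := hr
    set c : ℝ := (-1:ℝ)^n * 2^n * n.factorial with hc
    have heq : (fun s => Dsup n (fun s => s / (x₀ ^ 2 + s ^ 2)) s / s)
        =ᶠ[nhds r] (fun s => c * ((x₀^2 + s^2)^(n+1))⁻¹) := by
      filter_upwards [Ioi_mem_nhds hr0] with s hs
      have hs0 : (0:ℝ) < s := hs
      have hxs : (0:ℝ) < x₀ ^ 2 + s ^ 2 := by positivity
      rw [ih s hs]
      field_simp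
    have hxr0 : (0:ℝ) < x₀ ^ 2 + r ^ 2 := by positivity
    have hxr : x₀ ^ 2 + r ^ 2 ≠ 0 := ne_of_gt hxr0
    have h1 : HasDerivAt (fun s : ℝ => x₀^2 + s^2) (2*r) r := by
      simpa using ((hasDerivAt_pow 2 r).const_add (x₀^2))
    have h2 := ((h1.pow (n+1)).inv (pow_ne_zero _ hxr)).const_mul c
    have hkey : Dsup (n+1) (fun s => s / (x₀ ^ 2 + s ^ 2)) r =
        c * (-(↑(n + 1) * (x₀ ^ 2 + r ^ 2) ^ (n + 1 - 1) * (2 * r)) /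
          ((x₀ ^ 2 + r ^ 2) ^ (n + 1)) ^ 2) := by
      show deriv (fun s => Dsup n (fun s => s / (x₀ ^ 2 + s ^ 2)) s / s) r = _
      rw [heq.deriv_eq]
      exact h2.deriv
    rw [hkey, hc]
    rw [Nat.factorial_succ]
    push_cast
    field_simp
    ring
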